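/- Let p be a prime and Λ_p = {γ ∈ ℤ[1/p] : |γ|_∞ ≤ 1} ⊆ ℚ_p, where |·|_∞ is the real absolute value of γ viewed in ℝ. Then Λ_p is symmetric, multiplicatively closed, uniformly discrete and relatively dense in ℚ_p, and Λ_p + Λ_p ⊆ Λ_p + {−1, 0, 1}; in particular Λ_p is an approximate lattice in ℚ_p whose additive span is ℤ[1/p]. -/

import Mathlib

open scoped Pointwise
open Set

section Aux

variable (p : ℕ) [hp : Fact p.Prime]

private lemma aux_comb {F : Type*} [Field F] (hpF : ((p:ℕ) : F) ≠ 0) (a₁ a₂ : ℤ) (k₁ k₂ : ℕ) :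
    ((a₁:F))/(p:F)^k₁ + ((a₂:F))/(p:F)^k₂
      = (((a₁*p^k₂ + a₂*p^k₁ : ℤ)):F)/(p:F)^(k₁+k₂) := by
  push_cast
  rw [pow_add]
  rw [div_add_div _ _ (pow_ne_zero k₁ hpF) (pow_ne_zero k₂ hpF)]
  ring_nf

private lemma aux_norm_int_lb (a : ℤ) (ha : a ≠ 0) :
    (|(a:ℝ)|)⁻¹ ≤ ‖(a : ℚ_[p])‖ := by
  have hppos : (0:ℝ) < (p:ℝ) := by exact_mod_cast hp.1.pos
  have hv : ((p:ℤ) ^ padicValInt p a) ∣ a := padicValInt_dvd a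
  have h2' : ((p:ℤ)) ^ padicValInt p a ≤ |a| :=
    Int.le_of_dvd (abs_pos.mpr ha) ((dvd_abs _ _).mpr hv)
  have h2 : ((p:ℝ)) ^ padicValInt p a ≤ |(a:ℝ)| := by
    rw [← Int.cast_abs]; exact_mod_cast h2'
  have h1 : ‖(a : ℚ_[p])‖ = (p:ℝ) ^ (-(padicValInt p a : ℤ)) := by
    rw [← Rat.cast_intCast, Padic.eq_padicNorm]
    rw [padicNorm.eq_zpow_of_nonzero (by exact_mod_cast ha), padicValRat.of_int]
    push_cast
    norm_num
  rw [h1, zpow_neg]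
  have h3 : ((p:ℝ)) ^ ((padicValInt p a : ℤ)) = (p:ℝ) ^ padicValInt p a := zpow_natCast _ _
  rw [h3]
  exact inv_anti₀ (pow_pos hppos _) h2

/-- norm lower bound for a nonzero element of `ℤ[1/p]` with real absolute value at most 2 -/
private lemma aux_discrete (b : ℤ) (K : ℕ) (hb : b ≠ 0)
    (h : |(b:ℝ)/(p:ℝ)^K| ≤ 2) : (2:ℝ)⁻¹ ≤ ‖((b:ℚ_[p])/(p:ℚ_[p])^K)‖ := by
  have hppos : (0:ℝ) < (p:ℝ) := by exact_mod_cast hp.1.pos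
  have hpK : (0:ℝ) < (p:ℝ)^K := pow_pos hppos K
  have habs : |(b:ℝ)| ≤ 2 * (p:ℝ)^K := by
    rw [abs_div, div_le_iff₀ (by rwa [abs_of_pos hpK])] at h
    rwa [abs_of_pos hpK] at h
  have hbpos : (0:ℝ) < |(b:ℝ)| := abs_pos.mpr (by exact_mod_cast hb)
  rw [norm_div, norm_pow, Padic.norm_p, inv_pow, div_eq_mul_inv, inv_inv]
  calc (2:ℝ)⁻¹ = (2 * (p:ℝ)^K)⁻¹ * (p:ℝ)^K := by
        field_simp
    _ ≤ |(b:ℝ)|⁻¹ * (p:ℝ)^K := by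
        have := inv_anti₀ hbpos habs
        gcongr
    _ ≤ ‖(b:ℚ_[p])‖ * (p:ℝ)^K := by
        gcongr
        exact aux_norm_int_lb p b hb

end Aux

theorem stmt18 (p : ℕ) [Fact p.Prime] :
    let Λ : Set ℚ_[p] := {x | ∃ (a : ℤ) (k : ℕ),
      x = (a : ℚ_[p]) / (p : ℚ_[p]) ^ k ∧ |(a : ℝ) / (p : ℝ) ^ k| ≤ 1}
    (-Λ = Λ) ∧ (Λ * Λ ⊆ Λ) ∧
      (∃ U : Set ℚ_[p], IsOpen U ∧ (0 : ℚ_[p]) ∈ U ∧ (Λ - Λ) ∩ U = {0}) ∧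
      (∃ Q : Set ℚ_[p], IsCompact Q ∧ Λ + Q = Set.univ) ∧
      (Λ + Λ ⊆ Λ + ({-1, 0, 1} : Set ℚ_[p])) ∧
      (AddSubgroup.closure Λ : Set ℚ_[p]) =
        {x | ∃ (a : ℤ) (k : ℕ), x = (a : ℚ_[p]) / (p : ℚ_[p]) ^ k} := by
  intro Λ
  have hp : Fact p.Prime := inferInstance
  have hppos : (0:ℝ) < (p:ℝ) := by exact_mod_cast hp.1.pos
  have hp1R : (1:ℝ) ≤ (p:ℝ) := by exact_mod_cast hp.1.one_le
  have hpQp : ((p:ℕ) : ℚ_[p]) ≠ 0 := by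
    exact_mod_cast (Nat.cast_ne_zero (R := ℚ_[p])).mpr hp.1.ne_zero
  have hpR : ((p:ℕ) : ℝ) ≠ 0 := ne_of_gt hppos
  -- closure of Λ under negation
  have hneg : ∀ x ∈ Λ, -x ∈ Λ := by
    rintro x ⟨a, k, hx, hb⟩
    refine ⟨-a, k, ?_, ?_⟩
    · rw [hx]; push_cast; ring
    · rw [show ((-a : ℤ):ℝ)/(p:ℝ)^k = -(((a:ℤ):ℝ)/(p:ℝ)^k) by push_cast; ring, abs_neg]
      exact hb
  have hzero : (0:ℚ_[p]) ∈ Λ := ⟨0, 0, by simp, by simp⟩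
  refine ⟨?_, ?_, ?_, ?_, ?_, ?_⟩
  -- 1. symmetric
  · ext x
    rw [Set.mem_neg]
    exact ⟨fun h => neg_neg x ▸ hneg _ h, fun h => hneg _ h⟩
  -- 2. multiplicatively closed
  · rintro x hx
    rw [Set.mem_mul] at hx
    obtain ⟨y, ⟨a₁, k₁, hy, hb₁⟩, z, ⟨a₂, k₂, hz, hb₂⟩, rfl⟩ := hx
    refine ⟨a₁ * a₂, k₁ + k₂, ?_, ?_⟩
    · rw [hy, hz]; push_cast; rw [pow_add]; ring
    · have : ((a₁*a₂ : ℤ):ℝ)/(p:ℝ)^(k₁+k₂) = ((a₁:ℝ)/(p:ℝ)^k₁) * ((a₂:ℝ)/(p:ℝ)^k₂) := by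
        push_cast; rw [pow_add]; ring
      rw [this, abs_mul]
      exact mul_le_one₀ hb₁ (abs_nonneg _) hb₂
  -- 3. uniformly discrete
  · refine ⟨Metric.ball 0 2⁻¹, Metric.isOpen_ball, by simp, ?_⟩
    ext x
    simp only [Set.mem_inter_iff, Set.mem_singleton_iff, mem_ball_zero_iff]
    constructor
    · rintro ⟨hxd, hxn⟩
      by_contra hne
      rw [Set.mem_sub] at hxd
      obtain ⟨y, ⟨a₁, k₁, hy, hb₁⟩, z, ⟨a₂, k₂, hz, hb₂⟩, rfl⟩ := hxd
      set b : ℤ := a₁*p^k₂ + (-a₂)*p^k₁ with hbdef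
      have hQp : y - z = ((b:ℤ):ℚ_[p])/(p:ℚ_[p])^(k₁+k₂) := by
        rw [hy, hz, sub_eq_add_neg, show -((a₂:ℚ_[p])/(p:ℚ_[p])^k₂) = ((-a₂:ℤ):ℚ_[p])/(p:ℚ_[p])^k₂ by push_cast; ring]
        exact aux_comb p hpQp a₁ (-a₂) k₁ k₂
      have hR : ((b:ℤ):ℝ)/(p:ℝ)^(k₁+k₂) = (a₁:ℝ)/(p:ℝ)^k₁ + ((-a₂:ℤ):ℝ)/(p:ℝ)^k₂ :=
        (aux_comb p hpR a₁ (-a₂) k₁ k₂).symm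
      have hb2 : |((b:ℤ):ℝ)/(p:ℝ)^(k₁+k₂)| ≤ 2 := by
        rw [hR]
        refine (abs_add_le _ _).trans ?_
        have : |((-a₂:ℤ):ℝ)/(p:ℝ)^k₂| ≤ 1 := by
          rw [show ((-a₂:ℤ):ℝ)/(p:ℝ)^k₂ = -((a₂:ℝ)/(p:ℝ)^k₂) by push_cast; ring, abs_neg]
          exact hb₂
        linarith
      have hbne : b ≠ 0 := fun h0 => hne (by rw [hQp, h0]; simp)
      have := aux_discrete p b (k₁+k₂) hbne hb2
      rw [← hQp] at this
      linarith
    · rintro rfl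
      refine ⟨by simpa using Set.sub_mem_sub hzero hzero, by norm_num⟩
  -- 4. relatively dense
  · refine ⟨Metric.closedBall (0:ℚ_[p]) 1, isCompact_closedBall 0 1, ?_⟩
    ext x
    simp only [Set.mem_univ, iff_true]
    rw [Set.mem_add]
    obtain ⟨n, hn⟩ : ∃ n : ℕ, ‖x‖ ≤ (p:ℝ)^n := by
      obtain ⟨n, hn⟩ := exists_nat_ge ‖x‖
      exact ⟨n, hn.trans (by exact_mod_cast (Nat.lt_pow_self (n := n) hp.1.one_lt).le)⟩
    have hy : ‖(p:ℚ_[p])^n * x‖ ≤ 1 := by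
      rw [norm_mul, norm_pow, Padic.norm_p]
      calc ((p:ℝ)⁻¹)^n * ‖x‖ ≤ ((p:ℝ)⁻¹)^n * (p:ℝ)^n := by gcongr
        _ = 1 := by rw [← mul_pow, inv_mul_cancel₀ hpR, one_pow]
    set z : ℤ_[p] := ⟨(p:ℚ_[p])^n * x, hy⟩ with hzdef
    have hspec := z.appr_spec n
    rw [Ideal.mem_span_singleton] at hspec
    obtain ⟨c, hc⟩ := hspec
    have hcoe : ((z:ℚ_[p])) - ((z.appr n : ℕ):ℚ_[p]) = (p:ℚ_[p])^n * (c:ℚ_[p]) := by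
      exact_mod_cast congrArg (Subtype.val) hc
    have hzx : (z : ℚ_[p]) = (p:ℚ_[p])^n * x := rfl
    refine ⟨(((z.appr n : ℤ)):ℚ_[p])/(p:ℚ_[p])^n, ⟨(z.appr n : ℤ), n, rfl, ?_⟩,
      (c:ℚ_[p]), mem_closedBall_zero_iff.mpr c.property, ?_⟩
    · have h1 : ((z.appr n : ℕ) : ℝ) < (p:ℝ)^n := by exact_mod_cast z.appr_lt n
      rw [abs_of_nonneg (by positivity)]
      rw [div_le_one (by positivity)]
      push_cast
      exact h1.le
    · rw [hzx] at hcoe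
      have hpn : ((p:ℚ_[p]))^n ≠ 0 := pow_ne_zero _ hpQp
      have key : (p:ℚ_[p])^n * x = ((z.appr n : ℤ) : ℚ_[p]) + (p:ℚ_[p])^n * (c:ℚ_[p]) := by
        push_cast
        push_cast at hcoe
        linear_combination hcoe
      calc ((z.appr n : ℤ) : ℚ_[p])/(p:ℚ_[p])^n + (c:ℚ_[p])
          = (((z.appr n : ℤ) : ℚ_[p]) + (p:ℚ_[p])^n * (c:ℚ_[p]))/(p:ℚ_[p])^n := by
            rw [add_div, mul_div_cancel_left₀ _ hpn]
        _ = ((p:ℚ_[p])^n * x)/(p:ℚ_[p])^n := by rw [← key]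
        _ = x := mul_div_cancel_left₀ x hpn
  -- 5. Λ + Λ ⊆ Λ + {-1,0,1}
  · rintro x hx
    rw [Set.mem_add] at hx
    obtain ⟨y, ⟨a₁, k₁, hy, hb₁⟩, z, ⟨a₂, k₂, hz, hb₂⟩, rfl⟩ := hx
    set K := k₁ + k₂ with hK
    set b : ℤ := a₁*p^k₂ + a₂*p^k₁ with hbdef
    have hQp : y + z = (b:ℚ_[p])/(p:ℚ_[p])^K := by
      rw [hy, hz]; exact aux_comb p hpQp a₁ a₂ k₁ k₂
    have hR : ((b:ℤ):ℝ)/(p:ℝ)^K = (a₁:ℝ)/(p:ℝ)^k₁ + (a₂:ℝ)/(p:ℝ)^k₂ :=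
      (aux_comb p hpR a₁ a₂ k₁ k₂).symm
    set r : ℝ := (b:ℝ)/(p:ℝ)^K with hr
    have hr2 : |r| ≤ 2 := by
      rw [hR]
      exact (abs_add_le _ _).trans (by linarith)
    rw [Set.mem_add]
    by_cases h1 : |r| ≤ 1
    · exact ⟨y + z, ⟨b, K, hQp, h1⟩, 0, by simp, add_zero _⟩
    · push_neg at h1
      set ε : ℤ := if 0 < r then 1 else -1 with hε
      have hεmem : ((ε:ℚ_[p])) ∈ ({-1, 0, 1} : Set ℚ_[p]) := by
        rw [hε]; split_ifs <;> simp
      have hrε : ((b - ε*p^K : ℤ):ℝ)/(p:ℝ)^K = r - ε := by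
        rw [hr]; push_cast; field_simp
      have habs : |((b - ε*p^K : ℤ):ℝ)/(p:ℝ)^K| ≤ 1 := by
        rw [hrε, hε]
        obtain ⟨hl, hu⟩ := abs_le.mp hr2
        split_ifs with h0
        · rw [abs_of_pos h0] at h1
          push_cast
          rw [abs_le]
          constructor <;> linarith
        · push_neg at h0
          rw [abs_of_nonpos h0] at h1
          push_cast
          rw [abs_le]
          constructor <;> linarith
      refine ⟨((b - ε*p^K : ℤ):ℚ_[p])/(p:ℚ_[p])^K, ⟨(b - ε*p^K : ℤ), K, rfl, habs⟩,
        (ε:ℚ_[p]), hεmem, ?_⟩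
      rw [hQp]
      have hpn : ((p:ℚ_[p]))^K ≠ 0 := pow_ne_zero _ hpQp
      field_simp
      try push_cast
      try ring
  -- 6. closure
  · let S : AddSubgroup ℚ_[p] :=
      { carrier := {x | ∃ (a : ℤ) (k : ℕ), x = (a : ℚ_[p]) / (p : ℚ_[p]) ^ k}
        zero_mem' := ⟨0, 0, by simp⟩
        add_mem' := by
          rintro x y ⟨a₁, k₁, rfl⟩ ⟨a₂, k₂, rfl⟩
          exact ⟨a₁*p^k₂ + a₂*p^k₁, k₁+k₂, aux_comb p hpQp a₁ a₂ k₁ k₂⟩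
        neg_mem' := by
          rintro x ⟨a, k, rfl⟩
          exact ⟨-a, k, by push_cast; ring⟩ }
    apply Set.Subset.antisymm
    · intro x hx
      exact (AddSubgroup.closure_le S).mpr (fun y hy => by
        obtain ⟨a, k, hy1, _⟩ := hy
        exact ⟨a, k, hy1⟩) hx
    · rintro x ⟨a, k, rfl⟩
      have hu : ((1:ℤ):ℚ_[p])/(p:ℚ_[p])^k ∈ Λ := ⟨1, k, rfl, by
        rw [abs_of_nonneg (by positivity), div_le_one (by positivity)]
        push_cast
        exact one_le_pow₀ hp1R⟩
      have hmem := AddSubgroup.zsmul_mem (AddSubgroup.closure Λ)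
        (AddSubgroup.subset_closure hu) a
      have heq : a • (((1:ℤ):ℚ_[p])/(p:ℚ_[p])^k) = (a:ℚ_[p])/(p:ℚ_[p])^k := by
        rw [zsmul_eq_mul]
        push_cast
        ring
      rwa [heq] at hmem
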